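/- If the density f satisfies f^{(s)}(0) = 0 for all s < r-1 and f^{(r-1)}(0) = d (with f^{(r-1)} continuous at 0), then e(x) = μ - x + (μ d / r!) x^r + o(x^r) as x → 0+. -/

import Mathlib

open MeasureTheory Set Asymptotics

open Filter

/-- Integrating a function with expansion `c tᵏ + o(tᵏ)` at `0⁺`. -/
lemma key_int (k : ℕ) (c : ℝ) (h : ℝ → ℝ) (hh : Continuous h)
    (ho : (fun t => h t - c * t ^ k) =o[nhdsWithin 0 (Ioi 0)] fun t => t ^ k) :
    (fun x => (∫ t in (0:ℝ)..x, h t) - c / (k + 1) * x ^ (k + 1))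
      =o[nhdsWithin 0 (Ioi 0)] fun x => x ^ (k + 1) := by
  rw [isLittleO_iff] at ho ⊢
  intro ε hε
  have hb := ho hε
  rw [eventually_nhdsWithin_iff, Metric.eventually_nhds_iff] at hb ⊢
  obtain ⟨δ, hδ, hbd⟩ := hb
  refine ⟨δ, hδ, fun x hxδ hx0 => ?_⟩
  replace hx0 : 0 < x := hx0
  have hxd : |x| < δ := by simpa [Real.dist_eq] using hxδ
  have hsplit : (∫ t in (0:ℝ)..x, h t) - c / (k + 1) * x ^ (k + 1)
      = ∫ t in (0:ℝ)..x, (h t - c * t ^ k) := by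
    rw [intervalIntegral.integral_sub (g := fun t => c * t ^ k) (hh.intervalIntegrable _ _)
      (((continuous_const.mul (continuous_pow k))).intervalIntegrable _ _)]
    have : ∫ t in (0:ℝ)..x, c * t ^ k = c / (k+1) * x ^ (k+1) := by
      rw [intervalIntegral.integral_const_mul, integral_pow]
      ring
    rw [this]
  rw [hsplit]
  have hbound : ∀ t ∈ Set.uIoc (0:ℝ) x, ‖h t - c * t ^ k‖ ≤ ε * x ^ k := by
    intro t ht
    rw [Set.uIoc_of_le hx0.le] at ht
    have hdt : dist t 0 < δ := by
      rw [Real.dist_eq, sub_zero, abs_of_pos ht.1]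
      exact lt_of_le_of_lt ht.2 (lt_of_abs_lt hxd)
    have h1 := hbd hdt ht.1
    calc ‖h t - c * t ^ k‖ ≤ ε * ‖t ^ k‖ := h1
      _ = ε * t ^ k := by rw [Real.norm_eq_abs, abs_of_nonneg (pow_nonneg ht.1.le k)]
      _ ≤ ε * x ^ k := by
          exact mul_le_mul_of_nonneg_left (pow_le_pow_left₀ ht.1.le ht.2 k) hε.le
  calc ‖∫ t in (0:ℝ)..x, (h t - c * t ^ k)‖ ≤ ε * x ^ k * |x - 0| :=
      intervalIntegral.norm_integral_le_of_norm_le_const hbound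
    _ = ε * ‖x ^ (k+1)‖ := by
        rw [sub_zero, abs_of_pos hx0, Real.norm_eq_abs,
          abs_of_nonneg (pow_nonneg hx0.le _)]; ring
    _ ≤ ε * ‖x ^ (k+1)‖ := le_rfl

lemma ftc {r : ℕ} {f : ℝ → ℝ} (hfd : ContDiff ℝ r f) (s : ℕ) (hs : s < r) (x : ℝ) :
    iteratedDeriv s f x = iteratedDeriv s f 0 + ∫ t in (0:ℝ)..x, iteratedDeriv (s+1) f t := by
  have hdiff : Differentiable ℝ (iteratedDeriv s f) :=
    hfd.differentiable_iteratedDeriv s (by exact_mod_cast hs)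
  have h2 : ∫ t in (0:ℝ)..x, iteratedDeriv (s+1) f t
      = iteratedDeriv s f x - iteratedDeriv s f 0 := by
    apply intervalIntegral.integral_eq_sub_of_hasDerivAt
    · intro t _
      rw [iteratedDeriv_succ]
      exact (hdiff t).hasDerivAt
    · exact (hfd.continuous_iteratedDeriv (s+1) (by exact_mod_cast hs)).intervalIntegrable _ _
  rw [h2]; ring

lemma taylor_exp (r : ℕ) (hr : 1 ≤ r) (d : ℝ) (f : ℝ → ℝ) (hfd : ContDiff ℝ r f)
    (hzero : ∀ s : ℕ, s < r - 1 → iteratedDeriv s f 0 = 0)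
    (hd : iteratedDeriv (r - 1) f 0 = d)
    (hcont : ContinuousAt (iteratedDeriv (r - 1) f) 0) :
    ∀ k : ℕ, k ≤ r - 1 →
      (fun t => iteratedDeriv (r - 1 - k) f t - d / (Nat.factorial k) * t ^ k)
        =o[nhdsWithin 0 (Ioi 0)] fun t => t ^ k := by
  intro k
  induction k with
  | zero =>
    intro _
    simp only [Nat.sub_zero, Nat.factorial_zero, Nat.cast_one, div_one, pow_zero, mul_one]
    rw [isLittleO_one_iff]
    have : Tendsto (iteratedDeriv (r-1) f) (nhdsWithin 0 (Ioi 0)) (nhds d) := by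
      rw [← hd]
      exact hcont.continuousWithinAt.tendsto
    simpa using this.sub_const d
  | succ k ih =>
    intro hk1
    have hk : k ≤ r - 1 := by omega
    have ihk := ih hk
    have hs : r - 1 - (k+1) < r := by omega
    have hseq : r - 1 - (k+1) + 1 = r - 1 - k := by omega
    have hzs : iteratedDeriv (r - 1 - (k+1)) f 0 = 0 := hzero _ (by omega)
    have heq : ∀ x, iteratedDeriv (r - 1 - (k+1)) f x
        = ∫ t in (0:ℝ)..x, iteratedDeriv (r - 1 - k) f t := by
      intro x
      rw [ftc hfd _ hs x, hzs, hseq, zero_add]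
    have hcont' : Continuous (iteratedDeriv (r - 1 - k) f) :=
      hfd.continuous_iteratedDeriv _ (by exact_mod_cast Nat.sub_le_of_le_add (by omega) : ((r-1-k:ℕ):WithTop ℕ∞) ≤ r)
    have := key_int k (d / (Nat.factorial k)) _ hcont' ihk
    have hfac : d / (Nat.factorial k) / (k + 1) = d / (Nat.factorial (k+1)) := by
      rw [Nat.factorial_succ]
      push_cast
      rw [div_div]
      ring_nf
    rw [hfac] at this
    refine this.congr' (Eventually.of_forall fun x => ?_) EventuallyEq.rfl
    simp only [heq x]

/-- If `f⁽ˢ⁾(0) = 0` for `s < r-1` and `f⁽ʳ⁻¹⁾(0) = d` with `f⁽ʳ⁻¹⁾` continuous at `0`,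
then `e(x) = μ - x + (μ d / r!) xʳ + o(xʳ)` as `x → 0+`. -/
theorem stmt10 (r : ℕ) (hr : 1 ≤ r) (d : ℝ)
    (f : ℝ → ℝ) (hfd : ContDiff ℝ r f)
    (hzero : ∀ s : ℕ, s < r - 1 → iteratedDeriv s f 0 = 0)
    (hd : iteratedDeriv (r - 1) f 0 = d)
    (hcont : ContinuousAt (iteratedDeriv (r - 1) f) 0)
    (hfnn : ∀ x, 0 ≤ x → 0 ≤ f x)
    (hfint : IntegrableOn f (Ioi 0))
    (Fbar : ℝ → ℝ) (hFbar : ∀ x, 0 ≤ x → Fbar x = ∫ t in Ioi x, f t)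
    (hF0 : Fbar 0 = 1)
    (hFint : IntegrableOn Fbar (Ioi 0))
    (e : ℝ → ℝ) (he : ∀ x, e x = (∫ t in Ioi x, Fbar t) / Fbar x)
    (m : ℝ) (hm : m = e 0) :
    (fun x => e x - (m - x + m * d / (Nat.factorial r) * x ^ r))
      =o[nhdsWithin 0 (Ioi 0)] fun x => x ^ r := by
  have hr1 : r - 1 + 1 = r := by omega
  have hfc : Continuous f := hfd.continuous
  set G : ℝ → ℝ := fun x => ∫ t in (0:ℝ)..x, f t with hGdef
  set IntG : ℝ → ℝ := fun x => ∫ t in (0:ℝ)..x, G t with hIntGdef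
  -- Taylor expansion of f
  have hf_exp : (fun t => f t - d / (Nat.factorial (r-1)) * t ^ (r-1))
      =o[nhdsWithin 0 (Ioi 0)] fun t => t ^ (r-1) := by
    have := taylor_exp r hr d f hfd hzero hd hcont (r-1) le_rfl
    simpa only [Nat.sub_self, iteratedDeriv_zero] using this
  -- expansion of G
  have hc : d / ((Nat.factorial (r-1) : ℕ) : ℝ) / (((r-1 : ℕ) : ℝ) + 1)
      = d / ((Nat.factorial r : ℕ) : ℝ) := by
    have h2 : ((r - 1 : ℕ) : ℝ) + 1 = (r : ℝ) := by
      rw [Nat.cast_sub hr]; push_cast; ring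
    rw [h2, div_div]
    congr 1
    rw [← Nat.mul_factorial_pred (by omega : r ≠ 0)]
    push_cast; ring
  have hGexp : (fun x => G x - d / (Nat.factorial r) * x ^ r)
      =o[nhdsWithin 0 (Ioi 0)] fun x => x ^ r := by
    have := key_int (r-1) (d / (Nat.factorial (r-1))) f hfc hf_exp
    simpa only [hr1, hc] using this
  have hGcont : Continuous G :=
    intervalIntegral.continuous_primitive (fun a b => hfc.intervalIntegrable a b) 0
  -- x^r = o(x^(r-1))
  have hx_little : (fun x : ℝ => x) =o[nhdsWithin 0 (Ioi 0)] fun _ => (1:ℝ) :=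
    (isLittleO_one_iff ℝ).2 (tendsto_id.mono_right nhdsWithin_le_nhds)
  have hpow_little : (fun x : ℝ => x ^ r) =o[nhdsWithin 0 (Ioi 0)] fun x => x ^ (r-1) := by
    have := (isBigO_refl (fun x : ℝ => x ^ (r-1)) (nhdsWithin 0 (Ioi 0))).mul_isLittleO hx_little
    simpa only [← pow_succ, hr1, mul_one] using this
  have hGo : G =o[nhdsWithin 0 (Ioi 0)] fun x => x ^ (r-1) := by
    have h1 := hGexp.trans hpow_little
    have h2 := hpow_little.const_mul_left (d / (Nat.factorial r : ℝ))
    simpa only [sub_add_cancel] using h1.add h2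
  have hIntGo : IntG =o[nhdsWithin 0 (Ioi 0)] fun x => x ^ r := by
    have := key_int (r-1) 0 G hGcont (by simpa using hGo)
    simpa only [hr1, zero_div, zero_mul, sub_zero] using this
  -- G tendsto 0
  have hGtend : Tendsto G (nhdsWithin 0 (Ioi 0)) (nhds 0) := by
    have h0 : G 0 = 0 := intervalIntegral.integral_same
    have h2 : Tendsto G (nhdsWithin 0 (Ioi 0)) (nhds (G 0)) :=
      (hGcont.tendsto 0).mono_left nhdsWithin_le_nhds
    rwa [h0] at h2
  -- Fbar = 1 - G on [0,∞)
  have hF1 : ∫ t in Ioi (0:ℝ), f t = 1 := by rw [← hFbar 0 le_rfl, hF0]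
  have hFbar_eq : ∀ x : ℝ, 0 ≤ x → Fbar x = 1 - G x := by
    intro x hx
    have hsplit : ∫ t in Ioi (0:ℝ), f t = (∫ t in Ioc 0 x, f t) + ∫ t in Ioi x, f t := by
      rw [← setIntegral_union (Ioc_disjoint_Ioi le_rfl) measurableSet_Ioi
        (hfint.mono_set Ioc_subset_Ioi_self) (hfint.mono_set (Ioi_subset_Ioi hx)),
        Ioc_union_Ioi_eq_Ioi hx]
    have hGx : G x = ∫ t in Ioc 0 x, f t := intervalIntegral.integral_of_le hx
    rw [hFbar x hx]
    rw [hF1] at hsplit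
    rw [hGx]
    linarith
  -- m is the integral of Fbar
  have hmval : ∫ t in Ioi (0:ℝ), Fbar t = m := by rw [hm, he 0, hF0, div_one]
  -- numerator
  have hnum : ∀ x : ℝ, 0 ≤ x → (∫ t in Ioi x, Fbar t) = m - (x - IntG x) := by
    intro x hx
    have hsplit : ∫ t in Ioi (0:ℝ), Fbar t = (∫ t in Ioc 0 x, Fbar t) + ∫ t in Ioi x, Fbar t := by
      rw [← setIntegral_union (Ioc_disjoint_Ioi le_rfl) measurableSet_Ioi
        (hFint.mono_set Ioc_subset_Ioi_self) (hFint.mono_set (Ioi_subset_Ioi hx)),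
        Ioc_union_Ioi_eq_Ioi hx]
    have h1 : ∫ t in Ioc 0 x, Fbar t = ∫ t in Ioc 0 x, (1 - G t) :=
      setIntegral_congr_fun measurableSet_Ioc fun t ht => hFbar_eq t ht.1.le
    have h2 : ∫ t in Ioc 0 x, (1 - G t) = x - IntG x := by
      rw [← intervalIntegral.integral_of_le hx,
        intervalIntegral.integral_sub intervalIntegrable_const (hGcont.intervalIntegrable _ _),
        intervalIntegral.integral_const]
      simp
      rfl
    rw [hmval, h1, h2] at hsplit
    linarith
  -- little-o of the numerator
  have hN : (fun x => (m - x + IntG x) - (m - x + m * d / (Nat.factorial r) * x ^ r) * (1 - G x))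
      =o[nhdsWithin 0 (Ioi 0)] fun x => x ^ r := by
    have h3 : (fun x => x * G x) =o[nhdsWithin 0 (Ioi 0)] fun x => x ^ r := by
      have := (isBigO_refl (fun x : ℝ => x) (nhdsWithin 0 (Ioi 0))).mul_isLittleO hGo
      simpa only [← pow_succ', hr1] using this
    have h4 : (fun x => (m * d / (Nat.factorial r)) * (x ^ r * G x))
        =o[nhdsWithin 0 (Ioi 0)] fun x => x ^ r := by
      have hG1 : G =o[nhdsWithin 0 (Ioi 0)] fun _ => (1:ℝ) := (isLittleO_one_iff ℝ).2 hGtend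
      have := (isBigO_refl (fun x : ℝ => x ^ r) (nhdsWithin 0 (Ioi 0))).mul_isLittleO hG1
      simpa only [mul_one] using this.const_mul_left (m * d / (Nat.factorial r))
    have hcomb := ((hIntGo.add (hGexp.const_mul_left m)).sub h3).add h4
    refine hcomb.congr' (Eventually.of_forall fun x => ?_) EventuallyEq.rfl
    simp only
    ring
  -- denominator
  have hDtend : Tendsto (fun x => 1 - G x) (nhdsWithin 0 (Ioi 0)) (nhds 1) := by
    have h := hGtend.const_sub (1:ℝ)
    simpa using h
  have hne : ∀ᶠ x in nhdsWithin 0 (Ioi 0), 1 - G x ≠ 0 := hDtend.eventually_ne one_ne_zero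
  have hinvO : (fun x => (1 - G x)⁻¹) =O[nhdsWithin 0 (Ioi 0)] fun _ => (1:ℝ) :=
    (hDtend.inv₀ one_ne_zero).isBigO_one ℝ
  have hquot : (fun x => ((m - x + IntG x) - (m - x + m * d / (Nat.factorial r) * x ^ r)
      * (1 - G x)) * (1 - G x)⁻¹) =o[nhdsWithin 0 (Ioi 0)] fun x => x ^ r := by
    simpa only [mul_one] using hN.mul_isBigO hinvO
  have heq : (fun x => ((m - x + IntG x) - (m - x + m * d / (Nat.factorial r) * x ^ r)
      * (1 - G x)) * (1 - G x)⁻¹)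
      =ᶠ[nhdsWithin 0 (Ioi 0)] fun x => e x - (m - x + m * d / (Nat.factorial r) * x ^ r) := by
    filter_upwards [hne, self_mem_nhdsWithin] with x hne0 hx
    have hx0 : (0:ℝ) < x := hx
    rw [he x, hnum x hx0.le, hFbar_eq x hx0.le]
    field_simp
    ring
  exact hquot.congr' heq EventuallyEq.rfl
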